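/- Let G be a graph, B a PSD forcing set of G, F a relaxed chronology of PSD forces of B on G with forcing tree cover T. Then for each time-step k, for each component C of G minus the set of vertices blue after step k, and for each forcing tree T ∈ T, there is at most one blue vertex v ∈ V(T) having a white neighbor in C. -/

import Mathlib

namespace ZF

variable {V : Type*} [Fintype V] [DecidableEq V]

/-- A valid standard zero forcing force within the vertex set `U`, given blue set `B`:
`u` is blue, `v` is its unique white neighbor in `U`. -/
def ZFValid (G : SimpleGraph V) (U B : Set V) (u v : V) : Prop :=
  u ∈ U ∧ v ∈ U ∧ u ∈ B ∧ v ∉ B ∧ G.Adj u v ∧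
    ∀ w ∈ U, G.Adj u w → w ∉ B → w = v

/-- `whiteConn G U B a b` : `a` and `b` are joined by a walk through white
(non-blue) vertices of `U` (possibly trivial). -/
def whiteConn (G : SimpleGraph V) (U B : Set V) : V → V → Prop :=
  Relation.ReflTransGen (fun a b => G.Adj a b ∧ a ∈ U ∧ b ∈ U ∧ a ∉ B ∧ b ∉ B)

/-- A valid PSD force within the vertex set `U`, given blue set `B`:
`u` is blue and `v` is the unique neighbor of `u` in the component of the
white subgraph containing `v`. -/
def PSDValid (G : SimpleGraph V) (U B : Set V) (u v : V) : Prop :=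
  u ∈ U ∧ v ∈ U ∧ u ∈ B ∧ v ∉ B ∧ G.Adj u v ∧
    ∀ w ∈ U, G.Adj u w → w ∉ B → whiteConn G U B v w → w = v

/-- One propagation step for a generic color change rule `valid`. -/
def step (valid : Set V → V → V → Prop) (B : Set V) : Set V :=
  B ∪ {v | ∃ u, valid B u v}

/-- Iterated propagation. -/
def iter (valid : Set V → V → V → Prop) (B : Set V) : ℕ → Set V :=
  fun k => (step valid)^[k] B

/-- `B ⊆ U` is a forcing set of the induced subgraph on `U` for the rule `valid`. -/
def IsForcingSet (valid : Set V → V → V → Prop) (U B : Set V) : Prop :=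
  B ⊆ U ∧ ∃ k, U ⊆ iter valid B k

/-- Propagation time of the set `B` for rule `valid` on the induced subgraph on `U`. -/
noncomputable def propTime (valid : Set V → V → V → Prop) (U B : Set V) : ℕ :=
  sInf {k | U ⊆ iter valid B k}

/-- Vertices blue after `k` time-steps of the family of forces `F`, starting from `B`. -/
def expand (B : Set V) (F : ℕ → Set (V × V)) : ℕ → Set V
  | 0 => B
  | k + 1 => expand B F k ∪ {v | ∃ u, (u, v) ∈ F (k + 1)}

/-- A relaxed chronology of forces (for the rule `valid`) for the forcing set `B`
on the induced subgraph on `U`, with completion time `K`: at each time-step an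
arbitrary subset of the currently valid forces is performed (no vertex being
forced twice in one step), and all of `U` is blue after step `K`. -/
structure RelaxedChron (valid : Set V → V → V → Prop) (U B : Set V)
    (K : ℕ) (F : ℕ → Set (V × V)) : Prop where
  subset : B ⊆ U
  init : F 0 = ∅
  bound : ∀ k, K < k → F k = ∅
  forcesValid : ∀ k < K, ∀ u v, (u, v) ∈ F (k + 1) → valid (expand B F k) u v
  uniqueForcer : ∀ k u₁ u₂ v, (u₁, v) ∈ F k → (u₂, v) ∈ F k → u₁ = u₂
  complete : U ⊆ expand B F K

/-- The underlying set of forces of a relaxed chronology. -/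
def forcesOf (F : ℕ → Set (V × V)) (K : ℕ) : Set (V × V) :=
  {p | ∃ k, 1 ≤ k ∧ k ≤ K ∧ p ∈ F k}

/-- The terminus of a relaxed chronology: the vertices (of `U`) performing no force. -/
def terminus (U : Set V) (F : ℕ → Set (V × V)) (K : ℕ) : Set V :=
  {v ∈ U | ∀ u, (v, u) ∉ forcesOf F K}

/-- The reversal of a relaxed chronology: each force is reversed and
the order of the time-steps is reversed. -/
def revChron (F : ℕ → Set (V × V)) (K : ℕ) : ℕ → Set (V × V) :=
  fun k => if 1 ≤ k ∧ k ≤ K then {p | (p.2, p.1) ∈ F (K - k + 1)} else ∅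

/-- One round of performing all currently valid forces from the set of forces `S`. -/
def forceStep (valid : Set V → V → V → Prop) (S : Set (V × V)) (B : Set V) : Set V :=
  B ∪ {v | ∃ u, (u, v) ∈ S ∧ valid B u v}

def forceIter (valid : Set V → V → V → Prop) (S : Set (V × V)) (B : Set V) : ℕ → Set V :=
  fun t => (forceStep valid S)^[t] B

/-- Propagation time of a set of forces `S` for starting set `B` on `U`. -/
noncomputable def ptForces (valid : Set V → V → V → Prop) (U : Set V)
    (S : Set (V × V)) (B : Set V) : ℕ :=
  sInf {t | U ⊆ forceIter valid S B t}

/-- `v` is active at time-step `k` of the relaxed chronology `F`: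
it is blue after step `k` and has not yet performed a force. -/
def activeAt (B : Set V) (F : ℕ → Set (V × V)) (v : V) (k : ℕ) : Prop :=
  v ∈ expand B F k ∧ ∀ j ≤ k, ∀ u, (v, u) ∉ F j

/-- The zero forcing number. -/
noncomputable def Z (G : SimpleGraph V) : ℕ :=
  sInf {n | ∃ B : Set V, B.ncard = n ∧ IsForcingSet (ZFValid G Set.univ) Set.univ B}

/-- The PSD forcing number. -/
noncomputable def Zplus (G : SimpleGraph V) : ℕ :=
  sInf {n | ∃ B : Set V, B.ncard = n ∧ IsForcingSet (PSDValid G Set.univ) Set.univ B}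

/-- Standard `m`-propagation time `pt(G,m)`. -/
noncomputable def ptm (G : SimpleGraph V) (m : ℕ) : ℕ :=
  sInf {t | ∃ B : Set V, B.ncard = m ∧ IsForcingSet (ZFValid G Set.univ) Set.univ B ∧
    propTime (ZFValid G Set.univ) Set.univ B = t}

/-- PSD `m`-propagation time `pt₊(G,m)`. -/
noncomputable def ptplusm (G : SimpleGraph V) (m : ℕ) : ℕ :=
  sInf {t | ∃ B : Set V, B.ncard = m ∧ IsForcingSet (PSDValid G Set.univ) Set.univ B ∧
    propTime (PSDValid G Set.univ) Set.univ B = t}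

/-- Standard propagation time `pt(G)`. -/
noncomputable def pt (G : SimpleGraph V) : ℕ := ptm G (Z G)

/-- PSD propagation time `pt₊(G)`. -/
noncomputable def ptplus (G : SimpleGraph V) : ℕ := ptplusm G (Zplus G)

/-- PSD throttling number `thr₊(G)`. -/
noncomputable def thrplus (G : SimpleGraph V) : ℕ :=
  sInf {t | ∃ B : Set V, IsForcingSet (PSDValid G Set.univ) Set.univ B ∧
    t = B.ncard + propTime (PSDValid G Set.univ) Set.univ B}

/-- Closed neighborhood of a set. -/
def closedNbhd (G : SimpleGraph V) (B : Set V) : Set V :=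
  B ∪ {v | ∃ u ∈ B, G.Adj u v}

/-- Power domination process: the first step colors the closed neighborhood,
subsequent steps apply the standard zero forcing rule. -/
def pdIter (G : SimpleGraph V) (B : Set V) : ℕ → Set V
  | 0 => B
  | 1 => closedNbhd G B
  | (k + 2) => step (ZFValid G Set.univ) (pdIter G B (k + 1))

/-- `B` is a power dominating set. -/
def IsPDSet (G : SimpleGraph V) (B : Set V) : Prop :=
  ∃ k, Set.univ ⊆ pdIter G B k

/-- Power propagation time of a set. -/
noncomputable def pdPropTime (G : SimpleGraph V) (B : Set V) : ℕ :=
  sInf {k | Set.univ ⊆ pdIter G B k}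

/-- Power `m`-propagation time `ppt(G,m)`. -/
noncomputable def pptm (G : SimpleGraph V) (m : ℕ) : ℕ :=
  sInf {t | ∃ B : Set V, B.ncard = m ∧ IsPDSet G B ∧ pdPropTime G B = t}

/-- Restriction of a family of forces to those with both endpoints in `W`. -/
def restrictF (F : ℕ → Set (V × V)) (W : Set V) : ℕ → Set (V × V) :=
  fun k => {p ∈ F k | p.1 ∈ W ∧ p.2 ∈ W}

/-- The forcing tree of `b` : all vertices reachable from `b` by a chain of forces in `S`. -/
def treeOf (S : Set (V × V)) (b : V) : Set V :=
  {w | Relation.ReflTransGen (fun a c => (a, c) ∈ S) b w}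

open Classical in
/-- The endpoint, after `k` steps, of the path grown from `b ∈ B` in the
path bundle of the relaxed chronology `F` induced by the vertex `x`: the path is
extended by a force from its current endpoint into the component of white
vertices containing `x`, whenever such a force occurs. -/
noncomputable def lastVert (G : SimpleGraph V) (B : Set V) (F : ℕ → Set (V × V))
    (x : V) (b : V) : ℕ → V
  | 0 => b
  | k + 1 =>
    if h : ∃ w, (lastVert G B F x b k, w) ∈ F (k + 1) ∧ x ∉ expand B F k ∧
        whiteConn G Set.univ (expand B F k) x w
    then h.choose else lastVert G B F x b k

/-- The vertex set of the path bundle of `F` induced by `x`. -/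
def bundle (G : SimpleGraph V) (B : Set V) (F : ℕ → Set (V × V)) (x : V) (K : ℕ) : Set V :=
  {v | ∃ b ∈ B, ∃ j ≤ K, lastVert G B F x b j = v}

/-- The path of the bundle grown from `b`, as a list of vertices. -/
noncomputable def bundlePath (G : SimpleGraph V) (B : Set V) (F : ℕ → Set (V × V))
    (x : V) (K : ℕ) (b : V) : List V :=
  ((List.range (K + 1)).map (lastVert G B F x b)).dedup

/-- A nonempty path in `G`, given as a list of distinct consecutively adjacent vertices. -/
def IsPathList (G : SimpleGraph V) (l : List V) : Prop :=
  l ≠ [] ∧ l.Nodup ∧ l.Chain' G.Adj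

/-- `P` is an `(α,β)`-linkage: a collection of pairwise vertex-disjoint paths,
`α` consisting of one endpoint of each path and `β` of the other endpoints. -/
def IsLinkage (G : SimpleGraph V) (α β : Set V) (P : Set (List V)) : Prop :=
  (∀ l ∈ P, IsPathList G l) ∧
  (∀ l ∈ P, ∀ l' ∈ P, l ≠ l' → ∀ v, v ∈ l → v ∉ l') ∧
  (∀ l ∈ P, ∀ l' ∈ P, l.head? = l'.head? → l = l') ∧
  (∀ l ∈ P, ∀ l' ∈ P, l.getLast? = l'.getLast? → l = l') ∧
  α = {v | ∃ l ∈ P, l.head? = some v} ∧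
  β = {v | ∃ l ∈ P, l.getLast? = some v}

/-- `P` is a rigid linkage: for some `α`, `β` it is the unique `(α,β)`-linkage in `G`. -/
def IsRigidLinkage (G : SimpleGraph V) (P : Set (List V)) : Prop :=
  ∃ α β, IsLinkage G α β P ∧ ∀ P', IsLinkage G α β P' → P' = P

/-- A path cover of `G` : `m` vertex-disjoint induced paths covering all vertices,
the `i`-th path having vertices `vtx i 0, …, vtx i (n i − 1)` in path order. -/
structure IsPathCover (G : SimpleGraph V) (m : ℕ) (n : Fin m → ℕ)
    (vtx : (i : Fin m) → Fin (n i) → V) : Prop where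
  pos : ∀ i, 0 < n i
  inj : Function.Injective (fun p : (i : Fin m) × Fin (n i) => vtx p.1 p.2)
  cover : ∀ v : V, ∃ i j, vtx i j = v
  induced : ∀ i (j j' : Fin (n i)),
    G.Adj (vtx i j) (vtx i j') ↔ ((j : ℕ) + 1 = (j' : ℕ) ∨ (j' : ℕ) + 1 = (j : ℕ))

/-- A witness that a path cover is a parallel increasing path cover: a collection of
block partitions of `{0,…,K}`, one per path, compatible with the edges of `G`. -/
structure IsPIPWitness (G : SimpleGraph V) (m : ℕ) (n : Fin m → ℕ)
    (vtx : (i : Fin m) → Fin (n i) → V) (K : ℕ)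
    (A : (i : Fin m) → Fin (n i) → Finset ℕ) : Prop where
  mem : ∀ i j, A i j ⊆ Finset.range (K + 1)
  nonempty : ∀ i j, (A i j).Nonempty
  partition : ∀ i, ∀ x ∈ Finset.range (K + 1), ∃! j, x ∈ A i j
  mono : ∀ i (j j' : Fin (n i)), (j : ℕ) < (j' : ℕ) → ∀ x ∈ A i j, ∀ y ∈ A i j', x < y
  edge : ∀ (i i' : Fin m) j j', i ≠ i' →
    G.Adj (vtx i j) (vtx i' j') → ((A i j) ∩ (A i' j')).Nonempty

/-- A parallel increasing path cover of `G`. -/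
def IsPIP (G : SimpleGraph V) (m : ℕ) (n : Fin m → ℕ)
    (vtx : (i : Fin m) → Fin (n i) → V) : Prop :=
  IsPathCover G m n vtx ∧ ∃ K A, IsPIPWitness G m n vtx K A

/-- The path cover given by `vtx` is the chain set of the family of forces `F` :
the underlying forces are exactly the consecutive pairs along the paths. -/
def IsChainSetOf (m : ℕ) (n : Fin m → ℕ) (vtx : (i : Fin m) → Fin (n i) → V)
    (F : ℕ → Set (V × V)) (K : ℕ) : Prop :=
  ∀ u w, (u, w) ∈ forcesOf F K ↔
    ∃ (i : Fin m) (j : Fin (n i)) (j' : Fin (n i)),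
      u = vtx i j ∧ w = vtx i j' ∧ (j : ℕ) + 1 = (j' : ℕ)

end ZF

section PSDAux
set_option linter.unusedSectionVars false
set_option linter.unusedVariables false

open ZF

variable {V : Type*} [Fintype V] [DecidableEq V]
variable {G : SimpleGraph V} {B : Set V} {K : ℕ} {F : ℕ → Set (V × V)}

private lemma expand_mono (hF : True) {j k : ℕ} (h : j ≤ k) :
    ZF.expand B F j ⊆ ZF.expand B F k := by
  clear hF
  induction h with
  | refl => exact subset_rfl
  | step h ih => exact ih.trans Set.subset_union_left

private lemma whiteConn_symm {U E : Set V} {a b : V}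
    (h : ZF.whiteConn G U E a b) : ZF.whiteConn G U E b a :=
  (@Relation.ReflTransGen.stdSymm _ _
    ⟨fun _ _ hp => ⟨hp.1.symm, hp.2.2.1, hp.2.1, hp.2.2.2.2, hp.2.2.2.1⟩⟩).symm _ _ h

private lemma whiteConn_anti {U E E' : Set V} (hEE : E ⊆ E') {a b : V}
    (h : ZF.whiteConn G U E' a b) : ZF.whiteConn G U E a b :=
  Relation.ReflTransGen.mono
    (r := fun a b => G.Adj a b ∧ a ∈ U ∧ b ∈ U ∧ a ∉ E' ∧ b ∉ E')
    (p := fun a b => G.Adj a b ∧ a ∈ U ∧ b ∈ U ∧ a ∉ E ∧ b ∉ E)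
    (fun _ _ hp => ⟨hp.1, hp.2.1, hp.2.2.1, fun hx => hp.2.2.2.1 (hEE hx),
      fun hx => hp.2.2.2.2 (hEE hx)⟩) _ _ h

/-- Any force occurs at a time `s+1` with `s+1 ≤ K` and is valid at time `s`. -/
private lemma mem_F_succ (hF : ZF.RelaxedChron (ZF.PSDValid G Set.univ) Set.univ B K F)
    {u v : V} {t : ℕ} (h : (u, v) ∈ F t) :
    ∃ s, t = s + 1 ∧ s + 1 ≤ K ∧ ZF.PSDValid G Set.univ (ZF.expand B F s) u v := by
  cases t with
  | zero => rw [hF.init] at h; exact absurd h (Set.notMem_empty _)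
  | succ s =>
    by_cases hK : s + 1 ≤ K
    · exact ⟨s, rfl, hK, hF.forcesValid s (by omega) u v h⟩
    · rw [hF.bound (s + 1) (by omega)] at h; exact absurd h (Set.notMem_empty _)

private lemma forced_mem_expand {u v : V} {s : ℕ} (h : (u, v) ∈ F (s + 1)) :
    v ∈ ZF.expand B F (s + 1) :=
  Or.inr ⟨u, h⟩

/-- If `v` was forced at time `s+1` and is blue at time `k`, then `s + 1 ≤ k`. -/
private lemma forced_le (hF : ZF.RelaxedChron (ZF.PSDValid G Set.univ) Set.univ B K F)
    {u v : V} {s k : ℕ} (h : (u, v) ∈ F (s + 1)) (hv : v ∈ ZF.expand B F k) :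
    s + 1 ≤ k := by
  obtain ⟨s', hs', _, hvalid⟩ := mem_F_succ hF h
  rw [show s' = s from by omega] at hvalid
  by_contra hlt
  exact hvalid.2.2.2.1 (expand_mono trivial (by omega : k ≤ s) hv)

private def FRel (F : ℕ → Set (V × V)) (K : ℕ) : V → V → Prop :=
  fun a c => (a, c) ∈ ZF.forcesOf F K

/-- Key lemma: if `x` is forced at time `s+1` and `v` is a forcing descendant of `x`,
then `v` is white at time `s`, white-connected to `x` at time `s`, and was forced at
some time `s'+1` with `s ≤ s'`. -/
private lemma descend (hF : ZF.RelaxedChron (ZF.PSDValid G Set.univ) Set.univ B K F)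
    {u x v : V} {s : ℕ} (hx : (u, x) ∈ F (s + 1))
    (hc : Relation.ReflTransGen (FRel F K) x v) :
    v ∉ ZF.expand B F s ∧ ZF.whiteConn G Set.univ (ZF.expand B F s) x v ∧
      ∃ u' s', s ≤ s' ∧ (u', v) ∈ F (s' + 1) := by
  induction hc with
  | refl =>
    obtain ⟨s', hs', _, hvalid⟩ := mem_F_succ hF hx
    rw [show s' = s from by omega] at hvalid
    exact ⟨hvalid.2.2.2.1, Relation.ReflTransGen.refl, u, s, le_refl _, hx⟩
  | @tail v' v hxv' hv'v ih =>
    obtain ⟨hwv', hconn', u', s', hss', hforce'⟩ := ih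
    obtain ⟨t, _, _, hmem⟩ := hv'v
    obtain ⟨s₂, rfl, hs₂K, hvalid₂⟩ := mem_F_succ hF hmem
    obtain ⟨s'', hs'', _, hvalid'⟩ := mem_F_succ hF hforce'
    rw [show s'' = s' from by omega] at hvalid'
    -- v' is blue at s₂ and white at s', so s' < s₂
    have hlt : s' < s₂ := by
      by_contra hge
      exact hvalid'.2.2.2.1 (expand_mono trivial (by omega : s₂ ≤ s') hvalid₂.2.2.1)
    have hwv : v ∉ ZF.expand B F s :=
      fun hmem' => hvalid₂.2.2.2.1 (expand_mono trivial (by omega : s ≤ s₂) hmem')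
    refine ⟨hwv, hconn'.tail ⟨hvalid₂.2.2.2.2.1, trivial, trivial, hwv', hwv⟩,
      v', s₂, by omega, hmem⟩

/-- The "branch" case: a vertex `r` forces both `x₁` (at time `s₁+1`) and `x₂ ≠ x₁`
(at a later or equal time `s₂+1`), with descendants `v₁, v₂` having white neighbors
`w₁, w₂` in a common white component at time `k`.  Impossible. -/
private lemma branch (hF : ZF.RelaxedChron (ZF.PSDValid G Set.univ) Set.univ B K F)
    {r x₁ x₂ v₁ v₂ w₁ w₂ : V} {s₁ s₂ k : ℕ}
    (h1 : (r, x₁) ∈ F (s₁ + 1)) (h2 : (r, x₂) ∈ F (s₂ + 1)) (hle : s₁ ≤ s₂)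
    (hne : x₁ ≠ x₂)
    (c1 : Relation.ReflTransGen (FRel F K) x₁ v₁)
    (c2 : Relation.ReflTransGen (FRel F K) x₂ v₂)
    (hb1 : v₁ ∈ ZF.expand B F k)
    (hw1 : w₁ ∉ ZF.expand B F k) (hw2 : w₂ ∉ ZF.expand B F k)
    (ha1 : G.Adj v₁ w₁) (ha2 : G.Adj v₂ w₂)
    (hcw : ZF.whiteConn G Set.univ (ZF.expand B F k) w₁ w₂) : False := by
  obtain ⟨hwv₁, hconn₁, u₁', s₁', hs₁', hforce₁'⟩ := descend hF h1 c1
  obtain ⟨hwv₂, hconn₂, _, _, _, _⟩ := descend hF h2 c2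
  obtain ⟨t₁, ht₁, hK₁, hvalid₁⟩ := mem_F_succ hF h1
  rw [show t₁ = s₁ from by omega] at hvalid₁
  obtain ⟨t₂, ht₂, hK₂, hvalid₂⟩ := mem_F_succ hF h2
  rw [show t₂ = s₂ from by omega] at hvalid₂
  -- s₁ + 1 ≤ k, hence expand s₁ ⊆ expand k
  have hs₁k : s₁ + 1 ≤ k := le_trans (by omega) (forced_le hF hforce₁' hb1)
  have hsub : ZF.expand B F s₁ ⊆ ZF.expand B F k := expand_mono trivial (by omega)
  have hsub₂ : ZF.expand B F s₁ ⊆ ZF.expand B F s₂ := expand_mono trivial (by omega)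
  -- whites at time s₁
  have hwv₂' : v₂ ∉ ZF.expand B F s₁ := fun h => hwv₂ (hsub₂ h)
  have hwx₂ : x₂ ∉ ZF.expand B F s₁ := fun h => hvalid₂.2.2.2.1 (hsub₂ h)
  have hww₁ : w₁ ∉ ZF.expand B F s₁ := fun h => hw1 (hsub h)
  have hww₂ : w₂ ∉ ZF.expand B F s₁ := fun h => hw2 (hsub h)
  -- white walk from x₁ to x₂ at time s₁
  have step1 : ZF.whiteConn G Set.univ (ZF.expand B F s₁) x₁ w₁ :=
    hconn₁.tail ⟨ha1, trivial, trivial, hwv₁, hww₁⟩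
  have step2 : ZF.whiteConn G Set.univ (ZF.expand B F s₁) x₁ w₂ :=
    step1.trans (whiteConn_anti hsub hcw)
  have step3 : ZF.whiteConn G Set.univ (ZF.expand B F s₁) x₁ v₂ :=
    step2.tail ⟨ha2.symm, trivial, trivial, hww₂, hwv₂'⟩
  have step4 : ZF.whiteConn G Set.univ (ZF.expand B F s₁) x₁ x₂ :=
    step3.trans (whiteConn_symm (whiteConn_anti hsub₂ hconn₂))
  exact hne ((hvalid₁.2.2.2.2.2 x₂ trivial hvalid₂.2.2.2.2.1 hwx₂ step4).symm)

/-- The "ancestor" case: `r` forces `x₂` (at time `s₂+1`) with a descendant `v₂`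
of `x₂`, and `r` itself has a white neighbor `w₁` in the same white component at
time `k` as a white neighbor `w₂` of `v₂`.  Impossible. -/
private lemma ancestor (hF : ZF.RelaxedChron (ZF.PSDValid G Set.univ) Set.univ B K F)
    {r x₂ v₂ w₁ w₂ : V} {s₂ k : ℕ}
    (h2 : (r, x₂) ∈ F (s₂ + 1))
    (c2 : Relation.ReflTransGen (FRel F K) x₂ v₂)
    (hb2 : v₂ ∈ ZF.expand B F k)
    (hw1 : w₁ ∉ ZF.expand B F k) (hw2 : w₂ ∉ ZF.expand B F k)
    (ha1 : G.Adj r w₁) (ha2 : G.Adj v₂ w₂)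
    (hcw : ZF.whiteConn G Set.univ (ZF.expand B F k) w₁ w₂) : False := by
  obtain ⟨hwv₂, hconn₂, u', s', hs', hforce'⟩ := descend hF h2 c2
  obtain ⟨t₂, ht₂, hK₂, hvalid₂⟩ := mem_F_succ hF h2
  rw [show t₂ = s₂ from by omega] at hvalid₂
  have hs₂k : s₂ + 1 ≤ k := le_trans (by omega) (forced_le hF hforce' hb2)
  have hsub : ZF.expand B F s₂ ⊆ ZF.expand B F k := expand_mono trivial (by omega)
  have hww₁ : w₁ ∉ ZF.expand B F s₂ := fun h => hw1 (hsub h)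
  have hww₂ : w₂ ∉ ZF.expand B F s₂ := fun h => hw2 (hsub h)
  have step1 : ZF.whiteConn G Set.univ (ZF.expand B F s₂) x₂ w₂ :=
    hconn₂.tail ⟨ha2, trivial, trivial, hwv₂, hww₂⟩
  have step2 : ZF.whiteConn G Set.univ (ZF.expand B F s₂) x₂ w₁ :=
    step1.trans (whiteConn_symm (whiteConn_anti hsub hcw))
  have := hvalid₂.2.2.2.2.2 w₁ trivial ha1 hww₁ step2
  -- but x₂ is blue at time k while w₁ is white
  exact hw1 (this ▸ expand_mono trivial hs₂k (forced_mem_expand h2))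

private lemma rel_exists_time {a c : V} (h : FRel F K a c) :
    ∃ s, (a, c) ∈ F (s + 1) := by
  obtain ⟨t, ht1, _, hmem⟩ := h
  obtain ⟨s, rfl⟩ : ∃ s, t = s + 1 := ⟨t - 1, by omega⟩
  exact ⟨s, hmem⟩

/-- Main combinatorial lemma, by strong induction on the total length of the two
forcing chains from the common ancestor `r`. -/
private lemma main_aux (hF : ZF.RelaxedChron (ZF.PSDValid G Set.univ) Set.univ B K F) :
    ∀ n : ℕ, ∀ r v₁ v₂ w₁ w₂ : V, ∀ k : ℕ, ∀ l₁ l₂ : List V,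
      l₁.length + l₂.length ≤ n →
      List.Chain (FRel F K) r l₁ → List.Chain (FRel F K) r l₂ →
      (r :: l₁).getLast (List.cons_ne_nil _ _) = v₁ →
      (r :: l₂).getLast (List.cons_ne_nil _ _) = v₂ →
      v₁ ∈ ZF.expand B F k → v₂ ∈ ZF.expand B F k →
      w₁ ∉ ZF.expand B F k → w₂ ∉ ZF.expand B F k →
      G.Adj v₁ w₁ → G.Adj v₂ w₂ →
      ZF.whiteConn G Set.univ (ZF.expand B F k) w₁ w₂ →
      v₁ = v₂ := by
  intro n
  induction n with
  | zero =>
    intro r v₁ v₂ w₁ w₂ k l₁ l₂ hlen _ _ hg1 hg2 _ _ _ _ _ _ _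
    obtain rfl : l₁ = [] := List.eq_nil_of_length_eq_zero (by omega)
    obtain rfl : l₂ = [] := List.eq_nil_of_length_eq_zero (by omega)
    simp only [List.getLast_singleton] at hg1 hg2
    rw [← hg1, ← hg2]
  | succ n ih =>
    intro r v₁ v₂ w₁ w₂ k l₁ l₂ hlen hc1 hc2 hg1 hg2 hb1 hb2 hw1 hw2 ha1 ha2 hcw
    match l₁, l₂ with
    | [], [] =>
      simp only [List.getLast_singleton] at hg1 hg2
      rw [← hg1, ← hg2]
    | [], x₂ :: m₂ =>
      simp only [List.getLast_singleton] at hg1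
      subst hg1
      obtain ⟨hrx₂, hm₂⟩ := List.isChain_cons_cons.mp hc2
      obtain ⟨s₂, hmem₂⟩ := rel_exists_time hrx₂
      have hchain₂ : Relation.ReflTransGen (FRel F K) x₂ v₂ :=
        List.relationReflTransGen_of_exists_isChain_cons m₂ hm₂
          (by rw [← hg2, List.getLast_cons_cons])
      exact absurd (ancestor hF hmem₂ hchain₂ hb2 hw1 hw2 ha1 ha2 hcw) id
    | x₁ :: m₁, [] =>
      simp only [List.getLast_singleton] at hg2
      subst hg2
      obtain ⟨hrx₁, hm₁⟩ := List.isChain_cons_cons.mp hc1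
      obtain ⟨s₁, hmem₁⟩ := rel_exists_time hrx₁
      have hchain₁ : Relation.ReflTransGen (FRel F K) x₁ v₁ :=
        List.relationReflTransGen_of_exists_isChain_cons m₁ hm₁
          (by rw [← hg1, List.getLast_cons_cons])
      exact absurd (ancestor hF hmem₁ hchain₁ hb1 hw2 hw1 ha2 ha1
        (whiteConn_symm hcw)) id
    | x₁ :: m₁, x₂ :: m₂ =>
      obtain ⟨hrx₁, hm₁⟩ := List.isChain_cons_cons.mp hc1
      obtain ⟨hrx₂, hm₂⟩ := List.isChain_cons_cons.mp hc2
      by_cases hxx : x₁ = x₂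
      · subst hxx
        exact ih x₁ v₁ v₂ w₁ w₂ k m₁ m₂ (by simp at hlen ⊢; omega) hm₁ hm₂
          (by rw [← hg1, List.getLast_cons_cons]) (by rw [← hg2, List.getLast_cons_cons])
          hb1 hb2 hw1 hw2 ha1 ha2 hcw
      · obtain ⟨s₁, hmem₁⟩ := rel_exists_time hrx₁
        obtain ⟨s₂, hmem₂⟩ := rel_exists_time hrx₂
        have hchain₁ : Relation.ReflTransGen (FRel F K) x₁ v₁ :=
          List.relationReflTransGen_of_exists_isChain_cons m₁ hm₁
            (by rw [← hg1, List.getLast_cons_cons])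
        have hchain₂ : Relation.ReflTransGen (FRel F K) x₂ v₂ :=
          List.relationReflTransGen_of_exists_isChain_cons m₂ hm₂
            (by rw [← hg2, List.getLast_cons_cons])
        rcases le_total s₁ s₂ with hle | hle
        · exact absurd (branch hF hmem₁ hmem₂ hle hxx hchain₁ hchain₂ hb1
            hw1 hw2 ha1 ha2 hcw) id
        · exact absurd (branch hF hmem₂ hmem₁ hle (Ne.symm hxx) hchain₂ hchain₁ hb2
            hw2 hw1 ha2 ha1 (whiteConn_symm hcw)) id

end PSDAux

/-- For a relaxed chronology of PSD forces, at each time-step, for each component of the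
white subgraph and each forcing tree, at most one blue vertex of that tree has a white
neighbor in that component. -/
theorem psd_tree_unique_forcer {V : Type*} [Fintype V] [DecidableEq V]
    (G : SimpleGraph V) (B : Set V) (K : ℕ) (F : ℕ → Set (V × V))
    (hB : ZF.IsForcingSet (ZF.PSDValid G Set.univ) Set.univ B)
    (hF : ZF.RelaxedChron (ZF.PSDValid G Set.univ) Set.univ B K F)
    (k : ℕ) (b : V) (hb : b ∈ B) (v₁ v₂ w₁ w₂ : V)
    (h₁ : v₁ ∈ ZF.treeOf (ZF.forcesOf F K) b) (h₂ : v₂ ∈ ZF.treeOf (ZF.forcesOf F K) b)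
    (hb₁ : v₁ ∈ ZF.expand B F k) (hb₂ : v₂ ∈ ZF.expand B F k)
    (hw₁ : w₁ ∉ ZF.expand B F k) (hw₂ : w₂ ∉ ZF.expand B F k)
    (ha₁ : G.Adj v₁ w₁) (ha₂ : G.Adj v₂ w₂)
    (hconn : ZF.whiteConn G Set.univ (ZF.expand B F k) w₁ w₂) :
    v₁ = v₂ := by
  obtain ⟨l₁, hl₁, hg₁⟩ := List.exists_isChain_cons_of_relationReflTransGen h₁
  obtain ⟨l₂, hl₂, hg₂⟩ := List.exists_isChain_cons_of_relationReflTransGen h₂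
  exact main_aux hF (l₁.length + l₂.length) b v₁ v₂ w₁ w₂ k l₁ l₂ le_rfl
    hl₁ hl₂ hg₁ hg₂ hb₁ hb₂ hw₁ hw₂ ha₁ ha₂ hconn
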